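/- arXiv:2001.08289 — 4 statements merged into one kernel-verified Lean document; each statement's English description precedes it below -/
import Mathlib

section
/- Let α, β be real with 0 < α < β, and let σ₁ ∈ ℂ with σ₁ not in the closed real segment [-β, -α]. Then σ₁ + β ≠ 0 and t(σ₁) = ((σ₁ + α)(1 + β))/((σ₁ + β)(1 + α)) does not lie in the closed nonpositive real axis (-∞, 0]. -/
/-- For reals `0 < α < β` and complex `σ₁` not on the real segment `[-β, -α]`,
one has `σ₁ + β ≠ 0` and `t(σ₁) = ((σ₁+α)(1+β))/((σ₁+β)(1+α))` is not on the
closed nonpositive real axis `(-∞, 0]`. -/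
theorem t_not_nonpos_real_of_off_cut (α β : ℝ) (hα : 0 < α) (hαβ : α < β)
    (σ₁ : ℂ) (hσ : ¬(σ₁.im = 0 ∧ -β ≤ σ₁.re ∧ σ₁.re ≤ -α)) :
    σ₁ + (β : ℂ) ≠ 0 ∧
    ¬((((σ₁ + (α : ℂ)) * (1 + (β : ℂ))) / ((σ₁ + (β : ℂ)) * (1 + (α : ℂ)))).im = 0 ∧
      (((σ₁ + (α : ℂ)) * (1 + (β : ℂ))) / ((σ₁ + (β : ℂ)) * (1 + (α : ℂ)))).re ≤ 0) := by
  set x := σ₁.re with hx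
  set y := σ₁.im with hy
  have hd : σ₁ + (β : ℂ) ≠ 0 := by
    intro h
    apply hσ
    have hre := congrArg Complex.re h
    have him := congrArg Complex.im h
    simp [Complex.add_re, Complex.add_im] at hre him
    refine ⟨him, ?_, ?_⟩ <;> rw [show x = -β by linarith [hre]] <;> linarith
  refine ⟨hd, ?_⟩
  rintro ⟨him, hre⟩
  have h1α : (1 : ℂ) + (α : ℂ) ≠ 0 := by
    intro h
    have := congrArg Complex.re h
    simp at this
    linarith
  have hv : ((σ₁ + (β : ℂ)) * (1 + (α : ℂ))) ≠ 0 := mul_ne_zero hd h1α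
  have hns : 0 < Complex.normSq ((σ₁ + (β : ℂ)) * (1 + (α : ℂ))) :=
    Complex.normSq_pos.mpr hv
  rw [Complex.div_im] at him
  rw [Complex.div_re] at hre
  have hnum : ((σ₁ + (α : ℂ)) * (1 + (β : ℂ))).im * ((σ₁ + (β : ℂ)) * (1 + (α : ℂ))).re
      - ((σ₁ + (α : ℂ)) * (1 + (β : ℂ))).re * ((σ₁ + (β : ℂ)) * (1 + (α : ℂ))).im = 0 := by
    have h := him
    rw [div_sub_div_same, div_eq_zero_iff] at h
    rcases h with h | h
    · exact h
    · exact absurd h (ne_of_gt hns)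
  have hden : ((σ₁ + (α : ℂ)) * (1 + (β : ℂ))).re * ((σ₁ + (β : ℂ)) * (1 + (α : ℂ))).re
      + ((σ₁ + (α : ℂ)) * (1 + (β : ℂ))).im * ((σ₁ + (β : ℂ)) * (1 + (α : ℂ))).im ≤ 0 := by
    have h := hre
    rw [← add_div, div_nonpos_iff] at h
    rcases h with ⟨h1, h2⟩ | ⟨h1, h2⟩
    · linarith
    · exact h1
  simp only [Complex.mul_re, Complex.mul_im, Complex.add_re, Complex.add_im,
    Complex.one_re, Complex.one_im, Complex.ofReal_re, Complex.ofReal_im, ← hx, ← hy] at hnum hden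
  have hy0 : y = 0 := by
    have key : y * ((1 + α) * (1 + β) * (β - α)) = 0 := by linear_combination hnum
    have hpos : (0:ℝ) < (1 + α) * (1 + β) * (β - α) :=
      mul_pos (mul_pos (by linarith) (by linarith)) (by linarith)
    exact by
      rcases mul_eq_zero.mp key with h | h
      · exact h
      · linarith
  apply hσ
  rw [hy0] at hden
  have hp : (0:ℝ) < (1 + α) * (1 + β) := mul_pos (by linarith) (by linarith)
  have h2 : (x + α) * (x + β) ≤ 0 := by nlinarith [hden, hp]
  refine ⟨hy0, ?_, ?_⟩
  · nlinarith [h2, sq_nonneg (x + β)]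
  · nlinarith [h2, sq_nonneg (x + α)]
end

section
/- Let α, β be real with 0 < α < β, and let σ₁ ∈ ℂ with σ₁ not in the closed real segment [-β, -α]. Set t = ((σ₁ + α)(1 + β))/((σ₁ + β)(1 + α)) and z = (√t - 1)/(√t + 1), where √t is the principal square root. Then |z| < 1, and z = 0 when σ₁ = 1. -/
open Complex in
/-- If `0 < w.re ∨ w.im ≠ 0`, the principal square root of `w` has positive real part. -/
lemma re_cpow_half_pos_aux {w : ℂ} (hw : 0 < w.re ∨ w.im ≠ 0) :
    0 < (w ^ ((1 : ℂ) / 2)).re := by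
  have hw0 : w ≠ 0 := by
    rintro rfl
    rcases hw with h | h <;> simp at h
  rw [Complex.cpow_def_of_ne_zero hw0, Complex.exp_re]
  have harg : |w.arg| < Real.pi :=
    abs_lt.mpr ⟨Complex.neg_pi_lt_arg w, Complex.arg_lt_pi_iff.mpr (hw.imp le_of_lt id)⟩
  have him : (Complex.log w * (1 / 2)).im = w.arg / 2 := by
    simp [Complex.mul_im, Complex.log_im, Complex.log_re]
    ring
  rw [him]
  have hcos : 0 < Real.cos (w.arg / 2) := by
    apply Real.cos_pos_of_mem_Ioo
    rw [abs_lt] at harg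
    constructor <;> [linarith [harg.1]; linarith [harg.2]]
  positivity

/-- For reals `0 < α < β` and complex `σ₁` off the real segment `[-β, -α]`, with
`t = ((σ₁+α)(1+β))/((σ₁+β)(1+α))` and `z = (√t - 1)/(√t + 1)` (principal square
root), one has `|z| < 1`, and `z = 0` when `σ₁ = 1`. -/
theorem abs_z_lt_one_of_off_cut (α β : ℝ) (hα : 0 < α) (hαβ : α < β)
    (σ₁ : ℂ) (hσ : ¬(σ₁.im = 0 ∧ -β ≤ σ₁.re ∧ σ₁.re ≤ -α))
    (t z : ℂ)
    (ht : t = ((σ₁ + (α : ℂ)) * (1 + (β : ℂ))) / ((σ₁ + (β : ℂ)) * (1 + (α : ℂ))))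
    (hz : z = (t ^ ((1 : ℂ) / 2) - 1) / (t ^ ((1 : ℂ) / 2) + 1)) :
    ‖z‖ < 1 ∧ (σ₁ = 1 → z = 0) := by
  have h1α : (1 : ℂ) + (α : ℂ) ≠ 0 := by
    intro h
    have := congrArg Complex.re h
    simp at this
    linarith
  have h1β : (1 : ℂ) + (β : ℂ) ≠ 0 := by
    intro h
    have := congrArg Complex.re h
    simp at this
    linarith
  have hσβ : σ₁ + (β : ℂ) ≠ 0 := by
    intro h
    apply hσ
    have hre := congrArg Complex.re h
    have him := congrArg Complex.im h
    simp at hre him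
    refine ⟨him, by linarith, by linarith⟩
  have hσα : σ₁ + (α : ℂ) ≠ 0 := by
    intro h
    apply hσ
    have hre := congrArg Complex.re h
    have him := congrArg Complex.im h
    simp at hre him
    refine ⟨him, by linarith, by linarith⟩
  -- t is in the slit plane
  have hslit : 0 < t.re ∨ t.im ≠ 0 := by
    by_contra hc
    push_neg at hc
    obtain ⟨hre, him⟩ := hc
    have htr : t = (t.re : ℂ) := by
      apply Complex.ext <;> simp [him]
    set r : ℝ := t.re with hr
    have key : t * ((σ₁ + (β : ℂ)) * (1 + (α : ℂ))) = (σ₁ + (α : ℂ)) * (1 + (β : ℂ)) := by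
      rw [ht]
      field_simp
    rw [htr] at key
    have h1 := congrArg Complex.im key
    have h2 := congrArg Complex.re key
    simp [Complex.mul_im, Complex.mul_re] at h1 h2
    have him0 : σ₁.im = 0 := by
      have hfac : σ₁.im * ((1 + β) - r * (1 + α)) = 0 := by nlinarith [h1]
      rcases mul_eq_zero.mp hfac with h | h
      · exact h
      · exfalso; nlinarith
    apply hσ
    refine ⟨him0, ?_, ?_⟩
    · by_contra hcon
      push_neg at hcon
      have h3 : 0 ≤ r * (σ₁.re + β) :=
        mul_nonneg_of_nonpos_of_nonpos hre (by linarith)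
      nlinarith [h2, mul_nonneg h3 (show (0:ℝ) ≤ 1 + α by linarith),
        mul_pos (show (0:ℝ) < -(σ₁.re + α) by linarith) (show (0:ℝ) < 1 + β by linarith)]
    · by_contra hcon
      push_neg at hcon
      have h4 : r * (σ₁.re + β) ≤ 0 :=
        mul_nonpos_of_nonpos_of_nonneg hre (by linarith)
      nlinarith [h2, mul_nonneg (neg_nonneg.2 h4) (show (0:ℝ) ≤ 1 + α by linarith),
        mul_pos (show (0:ℝ) < σ₁.re + α by linarith) (show (0:ℝ) < 1 + β by linarith)]
  have hs : 0 < (t ^ ((1 : ℂ) / 2)).re := re_cpow_half_pos_aux hslit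
  set s : ℂ := t ^ ((1 : ℂ) / 2) with hsdef
  have hs1 : s + 1 ≠ 0 := by
    intro h
    have := congrArg Complex.re h
    simp at this
    linarith
  constructor
  · rw [hz, norm_div, div_lt_one (norm_pos_iff.mpr hs1)]
    have hsq : ‖s - 1‖ ^ 2 < ‖s + 1‖ ^ 2 := by
      rw [Complex.sq_norm, Complex.sq_norm]
      simp [Complex.normSq_apply]
      nlinarith [hs]
    exact lt_of_pow_lt_pow_left₀ 2 (norm_nonneg _) hsq
  · intro h1
    have ht1 : t = 1 := by
      rw [ht, h1, div_eq_one_iff_eq (mul_ne_zero h1β h1α)]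
      ring
    rw [hz, hsdef, ht1, Complex.one_cpow]
    simp
end

section
/- Let α, β be real with 0 < α < β. Then there exist complex numbers p₁, p₂, p₃ with p₁² + p₂² + p₃² = 1, p₂ ≠ 0, p₂² ≠ 1, such that α = -1 - p₁²/(p₂² - 1) and β = -1 - p₁²/p₂²; explicitly one may take p₁² = (1 + β)(1 + α)/(β - α) and p₂² = -(1 + α)/(β - α). Moreover any such p₂ satisfies that p₂² is a negative real number, so p₂ is not real. -/
lemma exists_sqrt (z : ℂ) : ∃ w : ℂ, w ^ 2 = z := by
  obtain ⟨w, hw⟩ := Complex.isAlgClosed.exists_pow_nat_eq z two_pos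
  exact ⟨w, hw⟩

/-- For reals `0 < α < β` there exist complex `p₁, p₂, p₃` with
`p₁² + p₂² + p₃² = 1`, `p₂ ≠ 0`, `p₂² ≠ 1`, realizing `α = -1 - p₁²/(p₂² - 1)` and
`β = -1 - p₁²/p₂²`, with the explicit choice `p₁² = (1+β)(1+α)/(β-α)` and
`p₂² = -(1+α)/(β-α)`. Moreover any such `p₂` has `p₂²` a negative real number,
hence `p₂` is not real. -/
theorem exists_complex_p_for_cut (α β : ℝ) (hα : 0 < α) (hαβ : α < β) :
    (∃ p₁ p₂ p₃ : ℂ,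
      p₁ ^ 2 + p₂ ^ 2 + p₃ ^ 2 = 1 ∧ p₂ ≠ 0 ∧ p₂ ^ 2 ≠ 1 ∧
      (α : ℂ) = -1 - p₁ ^ 2 / (p₂ ^ 2 - 1) ∧
      (β : ℂ) = -1 - p₁ ^ 2 / p₂ ^ 2 ∧
      p₁ ^ 2 = (1 + (β : ℂ)) * (1 + (α : ℂ)) / ((β : ℂ) - (α : ℂ)) ∧
      p₂ ^ 2 = -(1 + (α : ℂ)) / ((β : ℂ) - (α : ℂ))) ∧
    (∀ p₁ p₂ : ℂ, p₂ ≠ 0 → p₂ ^ 2 ≠ 1 →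
      (α : ℂ) = -1 - p₁ ^ 2 / (p₂ ^ 2 - 1) →
      (β : ℂ) = -1 - p₁ ^ 2 / p₂ ^ 2 →
      (∃ r : ℝ, r < 0 ∧ p₂ ^ 2 = (r : ℂ)) ∧ ∀ r : ℝ, p₂ ≠ (r : ℂ)) := by
  have hd : (β : ℂ) - (α : ℂ) ≠ 0 := by
    rw [sub_ne_zero]
    exact_mod_cast hαβ.ne'
  have h1α : (1 : ℂ) + (α : ℂ) ≠ 0 := by
    have : (1 : ℝ) + α ≠ 0 := by positivity
    exact_mod_cast this
  have h1β : (1 : ℂ) + (β : ℂ) ≠ 0 := by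
    have : (1 : ℝ) + β ≠ 0 := by nlinarith
    exact_mod_cast this
  set A : ℂ := (1 + (β : ℂ)) * (1 + (α : ℂ)) / ((β : ℂ) - (α : ℂ)) with hA
  set B : ℂ := -(1 + (α : ℂ)) / ((β : ℂ) - (α : ℂ)) with hB
  have hBreal : B = ((-(1 + α) / (β - α) : ℝ) : ℂ) := by push_cast; rfl
  have hbneg : -(1 + α) / (β - α) < 0 := by
    apply div_neg_of_neg_of_pos <;> nlinarith
  have hBne : B ≠ 0 := by
    rw [hBreal]
    exact_mod_cast ne_of_lt hbneg
  have hBne1 : B ≠ 1 := by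
    rw [hBreal]
    intro h
    have : -(1 + α) / (β - α) = (1 : ℝ) := by exact_mod_cast h
    linarith
  constructor
  · obtain ⟨p₁, hp₁⟩ := exists_sqrt A
    obtain ⟨p₂, hp₂⟩ := exists_sqrt B
    obtain ⟨p₃, hp₃⟩ := exists_sqrt (1 - A - B)
    refine ⟨p₁, p₂, p₃, by rw [hp₁, hp₂, hp₃]; ring, ?_, ?_, ?_, ?_, hp₁, hp₂⟩
    · intro h; apply hBne; rw [← hp₂, h]; ring
    · rw [hp₂]; exact hBne1
    · have hB1 : B - 1 ≠ 0 := sub_ne_zero.mpr hBne1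
      have h2 : A = -(1 + (α : ℂ)) * (B - 1) := by
        rw [hA, hB]; field_simp; ring
      rw [hp₁, hp₂, h2, mul_div_assoc, div_self hB1, mul_one]; ring
    · have h3 : A = -(1 + (β : ℂ)) * B := by
        rw [hA, hB]; field_simp
      rw [hp₁, hp₂, h3, mul_div_assoc, div_self hBne, mul_one]; ring
  · intro p₁ p₂ h0 h1 heqα heqβ
    have hsq : p₂ ^ 2 ≠ 0 := pow_ne_zero 2 h0
    have hB1 : p₂ ^ 2 - 1 ≠ 0 := sub_ne_zero.mpr h1
    have e1 : p₁ ^ 2 = (-1 - (α : ℂ)) * (p₂ ^ 2 - 1) := by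
      field_simp at heqα
      linear_combination heqα
    have e2 : p₁ ^ 2 = (-1 - (β : ℂ)) * p₂ ^ 2 := by
      field_simp at heqβ
      linear_combination heqβ
    have key : p₂ ^ 2 = ((-(1 + α) / (β - α) : ℝ) : ℂ) := by
      rw [← hBreal, hB]
      field_simp
      linear_combination e2 - e1
    refine ⟨⟨-(1 + α) / (β - α), hbneg, key⟩, ?_⟩
    intro r hr
    rw [hr] at key
    have : r ^ 2 = -(1 + α) / (β - α) := by exact_mod_cast key
    nlinarith
end

section
/- The function σ₁ ↦ ((1 + 3σ₁)/(3 + σ₁))^(1/2), where the power is the principal complex power (principal branch of the argument in (-π, π]), is complex-differentiable (holomorphic) at every point of ℂ \ [-3, -1/3], where [-3, -1/3] denotes the real segment viewed as a subset of ℂ. -/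
/-- The Obnosov effective conductivity `σ₁ ↦ ((1 + 3σ₁)/(3 + σ₁))^(1/2)`
(principal complex power) is holomorphic at every point of
`ℂ \ [-3, -1/3]`, where `[-3, -1/3]` is the real segment viewed inside `ℂ`. -/
theorem obnosov_holomorphic_off_cut (σ₁ : ℂ)
    (h : ¬(σ₁.im = 0 ∧ -3 ≤ σ₁.re ∧ σ₁.re ≤ -(1 / 3))) :
    DifferentiableAt ℂ (fun σ : ℂ => ((1 + 3 * σ) / (3 + σ)) ^ ((1 : ℂ) / 2)) σ₁ := by
  set x := σ₁.re with hx
  set y := σ₁.im with hy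
  have hd : (3 + σ₁) ≠ 0 := by
    intro h0
    apply h
    have : σ₁ = -3 := by linear_combination h0
    refine ⟨by rw [hy, this]; simp, ?_, ?_⟩ <;> rw [hx, this] <;> norm_num
  have hN : 0 < Complex.normSq (3 + σ₁) := Complex.normSq_pos.mpr hd
  have hre3 : (3 + σ₁).re = 3 + x := by simp [hx]
  have him3 : (3 + σ₁).im = y := by simp [hy]
  have hre1 : (1 + 3 * σ₁).re = 1 + 3 * x := by simp [hx]
  have him1 : (1 + 3 * σ₁).im = 3 * y := by simp [hy]
  have hslit : (1 + 3 * σ₁) / (3 + σ₁) ∈ Complex.slitPlane := by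
    rcases eq_or_ne y 0 with hy0 | hy0
    · left
      have hx' : x < -3 ∨ -(1/3) < x := by
        by_contra hc
        push_neg at hc
        exact h ⟨hy0, hc.1, hc.2⟩
      rw [Complex.div_re, hre3, him3, hre1, him1, hy0]
      have : (0:ℝ) < (1 + 3*x) * (3 + x) := by
        rcases hx' with h1 | h1 <;> nlinarith
      have hN' : (0:ℝ) < Complex.normSq (3 + σ₁) := hN
      calc (0:ℝ) < ((1 + 3*x) * (3 + x)) / Complex.normSq (3 + σ₁) :=
            div_pos this hN'
        _ = (1 + 3 * x) * (3 + x) / Complex.normSq (3 + σ₁)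
            + 3 * 0 * 0 / Complex.normSq (3 + σ₁) := by ring
    · right
      rw [Complex.div_im, hre3, him3, hre1, him1]
      have : 3 * y * (3 + x) / Complex.normSq (3 + σ₁)
          - (1 + 3 * x) * y / Complex.normSq (3 + σ₁)
          = 8 * y / Complex.normSq (3 + σ₁) := by ring
      rw [this]
      exact div_ne_zero (by simpa using hy0) (ne_of_gt hN)
  apply DifferentiableAt.cpow
  · exact DifferentiableAt.div (by fun_prop) (by fun_prop) hd
  · exact differentiableAt_const _
  · exact hslit
end
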